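/- arXiv:1803.05143 — 2 statements merged into one kernel-verified Lean document; each statement's English description precedes it below -/
import Mathlib

section
/- Let W > 0, s > 0 and R_X ≥ R_U ≥ 0. Let L₁, …, L_t and M₁, …, M_m be mutually independent link capacities, each distributed as W·log₂(1 + s·X) with X exponential of rate 1. Let E be the event that (there exists i with L_i ≥ R_U) and ((there exists i with L_i ≥ R_X) or (there exists j with M_j ≥ R_X)). Then P(E) = Σ_{k=1}^{t} B(t, k, p(R_U)) · ((1 − σ^k) + σ^k·(1 − p(R_X)^m)), where σ = (p(R_X) − p(R_U))/(1 − p(R_U)). -/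
open MeasureTheory ProbabilityTheory

/-- The link outage probability `p(R) = P(C < R)` for capacity
`C = W·log₂(1 + snr·X)` with `X` exponential of rate 1. -/
noncomputable def outageProb (W snr R : ℝ) : ℝ :=
  1 - Real.exp (-(((2 : ℝ) ^ (R / W) - 1) / snr))

/-- `B(N,M,q) = C(N,M)·(1−q)^M·q^{N−M}`. -/
noncomputable def binProb (N M : ℕ) (q : ℝ) : ℝ :=
  (N.choose M : ℝ) * (1 - q) ^ M * q ^ (N - M)


lemma exp_ccdf_closed {Ω : Type*} [MeasureSpace Ω] [IsProbabilityMeasure (ℙ : Measure Ω)]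
    {f : Ω → ℝ}
    (h : ∀ x : ℝ, 0 ≤ x → ℙ {ω | f ω > x} = ENNReal.ofReal (Real.exp (-x)))
    {x : ℝ} (hx : 0 ≤ x) : ℙ {ω | x ≤ f ω} = ENNReal.ofReal (Real.exp (-x)) := by
  have hlow : ENNReal.ofReal (Real.exp (-x)) ≤ ℙ {ω | x ≤ f ω} := by
    rw [← h x hx]
    exact measure_mono fun ω hω => show x ≤ f ω from le_of_lt hω
  rcases hx.eq_or_lt with rfl | hx'
  · refine le_antisymm ?_ hlow
    simpa using prob_le_one
  · refine le_antisymm ?_ hlow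
    have h1 : Filter.Tendsto (fun y => ENNReal.ofReal (Real.exp (-y)))
        (nhdsWithin x (Set.Iio x)) (nhds (ENNReal.ofReal (Real.exp (-x)))) :=
      ((ENNReal.continuous_ofReal.comp
        (Real.continuous_exp.comp continuous_neg)).tendsto x).mono_left nhdsWithin_le_nhds
    refine ge_of_tendsto h1 ?_
    have h0 : ∀ᶠ y in nhdsWithin x (Set.Iio x), 0 < y :=
      Filter.Eventually.filter_mono nhdsWithin_le_nhds (eventually_gt_nhds hx')
    filter_upwards [h0, self_mem_nhdsWithin] with y hy0 hyx
    rw [← h y hy0.le]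
    exact measure_mono fun ω hω => show f ω > y from lt_of_lt_of_le hyx hω

lemma exp_cdf {Ω : Type*} [MeasureSpace Ω] [IsProbabilityMeasure (ℙ : Measure Ω)]
    {f : Ω → ℝ} (hf : Measurable f)
    (h : ∀ x : ℝ, 0 ≤ x → ℙ {ω | f ω > x} = ENNReal.ofReal (Real.exp (-x)))
    {x : ℝ} (hx : 0 ≤ x) : ℙ {ω | f ω < x} = ENNReal.ofReal (1 - Real.exp (-x)) := by
  have h1 : {ω | f ω < x} = {ω | x ≤ f ω}ᶜ := by
    ext ω; simp [not_le]
  rw [h1, prob_compl_eq_one_sub (measurableSet_le measurable_const hf),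
    exp_ccdf_closed h hx, ← ENNReal.ofReal_one,
    ← ENNReal.ofReal_sub _ (Real.exp_nonneg _)]

lemma xor_sum_identity (t m : ℕ) {p q : ℝ} (hp1 : p < 1) :
    ∑ k ∈ Finset.Icc 1 t, binProb t k p *
        ((1 - ((q - p) / (1 - p)) ^ k) + ((q - p) / (1 - p)) ^ k * (1 - q ^ m))
      = (1 - q ^ t) + ((q ^ t - q ^ t * q ^ m) - (p ^ t - p ^ t * q ^ m)) := by
  have hne : (1 : ℝ) - p ≠ 0 := by linarith
  set σ := (q - p) / (1 - p) with hσ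
  have hσp : (1 - p) * σ = q - p := by rw [hσ]; field_simp
  have h1 : ∑ k ∈ Finset.range (t + 1), binProb t k p = 1 := by
    have h := add_pow (1 - p) p t
    have e : (1 - p) + p = 1 := by ring
    rw [e, one_pow] at h
    calc ∑ k ∈ Finset.range (t + 1), binProb t k p
        = ∑ k ∈ Finset.range (t + 1), (1 - p) ^ k * p ^ (t - k) * (t.choose k : ℝ) :=
          Finset.sum_congr rfl fun k _ => by rw [binProb]; ring
      _ = 1 := h.symm
  have h2 : ∑ k ∈ Finset.range (t + 1), binProb t k p * σ ^ k = q ^ t := by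
    have h := add_pow ((1 - p) * σ) p t
    have e : (1 - p) * σ + p = q := by rw [hσp]; ring
    rw [e] at h
    calc ∑ k ∈ Finset.range (t + 1), binProb t k p * σ ^ k
        = ∑ k ∈ Finset.range (t + 1), ((1 - p) * σ) ^ k * p ^ (t - k) * (t.choose k : ℝ) :=
          Finset.sum_congr rfl fun k _ => by rw [binProb, mul_pow]; ring
      _ = q ^ t := h.symm
  have hIcc : Finset.Icc 1 t = (Finset.range (t + 1)).erase 0 := by
    ext k
    simp only [Finset.mem_Icc, Finset.mem_erase, Finset.mem_range]
    omega
  have h0mem : (0 : ℕ) ∈ Finset.range (t + 1) := by simp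
  have hbin0 : binProb t 0 p = p ^ t := by simp [binProb]
  have hA : ∑ k ∈ Finset.Icc 1 t, binProb t k p = 1 - p ^ t := by
    rw [hIcc, eq_sub_iff_add_eq, ← hbin0]
    rw [Finset.sum_erase_add _ _ h0mem, h1]
  have hB : ∑ k ∈ Finset.Icc 1 t, binProb t k p * σ ^ k = q ^ t - p ^ t := by
    rw [hIcc, eq_sub_iff_add_eq]
    have : p ^ t = binProb t 0 p * σ ^ 0 := by simp [hbin0]
    rw [this, Finset.sum_erase_add _ _ h0mem, h2]
  calc ∑ k ∈ Finset.Icc 1 t, binProb t k p * ((1 - σ ^ k) + σ ^ k * (1 - q ^ m))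
      = ∑ k ∈ Finset.Icc 1 t, (binProb t k p - binProb t k p * σ ^ k * q ^ m) :=
        Finset.sum_congr rfl fun k _ => by ring
    _ = (∑ k ∈ Finset.Icc 1 t, binProb t k p)
        - (∑ k ∈ Finset.Icc 1 t, binProb t k p * σ ^ k) * q ^ m := by
        rw [Finset.sum_sub_distrib, ← Finset.sum_mul]
    _ = (1 - q ^ t) + ((q ^ t - q ^ t * q ^ m) - (p ^ t - p ^ t * q ^ m)) := by
        rw [hA, hB]; ring

/-- **Per-node success probability `P(success₅)` in the XOR-CoW analysis.**
`L₁,…,L_t` and `M₁,…,M_m` are mutually independent link capacities, each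
`W·log₂(1 + snr·X)` with gain `X` exponential of rate 1 and `R_X ≥ R_U ≥ 0`.
The probability that (some `L i ≥ R_U`) and (some `L i ≥ R_X` or some
`M j ≥ R_X`) is `∑_{k=1}^{t} B(t,k,p(R_U))·((1 − σ^k) + σ^k·(1 − p(R_X)^m))`
with `σ = (p(R_X) − p(R_U))/(1 − p(R_U))`. -/
theorem xorCoW_per_node_success {Ω : Type*} [MeasureSpace Ω]
    [IsProbabilityMeasure (ℙ : Measure Ω)]
    (t m : ℕ) (W snr R_U R_X : ℝ) (hW : 0 < W) (hsnr : 0 < snr)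
    (hRU : 0 ≤ R_U) (hRX : R_U ≤ R_X)
    (L : Fin t → Ω → ℝ) (M : Fin m → Ω → ℝ)
    (hLmeas : ∀ i, Measurable (L i)) (hMmeas : ∀ j, Measurable (M j))
    (hindep : iIndepFun (Sum.elim L M) ℙ)
    (hLexp : ∀ i, ∀ x : ℝ, 0 ≤ x →
      ℙ {ω | L i ω > x} = ENNReal.ofReal (Real.exp (-x)))
    (hMexp : ∀ j, ∀ x : ℝ, 0 ≤ x →
      ℙ {ω | M j ω > x} = ENNReal.ofReal (Real.exp (-x))) :
    ℙ {ω | (∃ i : Fin t, R_U ≤ W * Real.logb 2 (1 + snr * L i ω)) ∧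
        ((∃ i : Fin t, R_X ≤ W * Real.logb 2 (1 + snr * L i ω)) ∨
          (∃ j : Fin m, R_X ≤ W * Real.logb 2 (1 + snr * M j ω)))} =
      ENNReal.ofReal (∑ k ∈ Finset.Icc 1 t,
        binProb t k (outageProb W snr R_U) *
          ((1 - ((outageProb W snr R_X - outageProb W snr R_U) /
              (1 - outageProb W snr R_U)) ^ k) +
            ((outageProb W snr R_X - outageProb W snr R_U) /
              (1 - outageProb W snr R_U)) ^ k *
              (1 - (outageProb W snr R_X) ^ m))) := by
  classical
  set p := outageProb W snr R_U with hp_def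
  set q := outageProb W snr R_X with hq_def
  set a : ℝ := ((2 : ℝ) ^ (R_U / W) - 1) / snr with ha_def
  set b : ℝ := ((2 : ℝ) ^ (R_X / W) - 1) / snr with hb_def
  have hp : p = 1 - Real.exp (-a) := rfl
  have hq : q = 1 - Real.exp (-b) := rfl
  clear_value p q a b
  have hRX0 : 0 ≤ R_X := hRU.trans hRX
  have hexp1 : ∀ x : ℝ, 0 ≤ x → Real.exp (-x) ≤ 1 := fun x hx => by
    rw [← Real.exp_zero]; exact Real.exp_le_exp.mpr (by linarith)
  have ha0 : 0 ≤ a := by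
    rw [ha_def]
    apply div_nonneg _ hsnr.le
    have h1 : (1 : ℝ) ≤ 2 ^ (R_U / W) := by
      have := Real.rpow_le_rpow_of_exponent_le one_le_two
        (div_nonneg hRU hW.le : (0 : ℝ) ≤ R_U / W)
      simpa using this
    linarith
  have hab : a ≤ b := by
    have h1 : (2 : ℝ) ^ (R_U / W) ≤ 2 ^ (R_X / W) :=
      Real.rpow_le_rpow_of_exponent_le one_le_two (by gcongr)
    rw [ha_def, hb_def]
    gcongr
  have hb0 : 0 ≤ b := ha0.trans hab
  have hp0 : 0 ≤ p := by rw [hp]; linarith [hexp1 a ha0]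
  have hq0 : 0 ≤ q := by rw [hq]; linarith [hexp1 b hb0]
  have hp1 : p < 1 := by rw [hp]; have := Real.exp_pos (-a); linarith
  have hq1 : q ≤ 1 := by rw [hq]; have := Real.exp_pos (-b); linarith
  have hpq : p ≤ q := by
    rw [hp, hq]
    have := Real.exp_le_exp.mpr (neg_le_neg hab)
    linarith
  -- events
  set A : Set Ω := ⋃ i, {ω | a ≤ L i ω} with hA_def
  set B : Set Ω := ⋃ i, {ω | b ≤ L i ω} with hB_def
  set C : Set Ω := ⋃ j, {ω | b ≤ M j ω} with hC_def
  clear_value A B C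
  have hmA : MeasurableSet A := by
    rw [hA_def]
    exact MeasurableSet.iUnion fun i => measurableSet_le measurable_const (hLmeas i)
  have hmB : MeasurableSet B := by
    rw [hB_def]
    exact MeasurableSet.iUnion fun i => measurableSet_le measurable_const (hLmeas i)
  have hmC : MeasurableSet C := by
    rw [hC_def]
    exact MeasurableSet.iUnion fun j => measurableSet_le measurable_const (hMmeas j)
  have hBA : B ⊆ A := by
    rw [hA_def, hB_def]
    exact Set.iUnion_mono fun i ω hω => le_trans hab hω
  -- pointwise equivalence
  have key : ∀ (R y : ℝ), 0 ≤ R → 0 < y →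
      (R ≤ W * Real.logb 2 (1 + snr * y) ↔ ((2 : ℝ) ^ (R / W) - 1) / snr ≤ y) := by
    intro R y hR hy
    have hxpos : (0 : ℝ) < 1 + snr * y := by positivity
    rw [mul_comm W, ← div_le_iff₀ hW, Real.le_logb_iff_rpow_le one_lt_two hxpos,
      div_le_iff₀ hsnr, mul_comm y snr]
    constructor <;> intro h <;> linarith
  -- a.e. positivity of the gains
  have hLpos : ∀ i, ∀ᵐ ω ∂(ℙ : Measure Ω), 0 < L i ω := by
    intro i
    have h1 : ℙ {ω | L i ω > 0} = 1 := by
      rw [hLexp i 0 le_rfl]; simp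
    rw [ae_iff]
    have hs : {ω | ¬ 0 < L i ω} = {ω | L i ω > 0}ᶜ := rfl
    rw [hs, prob_compl_eq_one_sub (measurableSet_lt measurable_const (hLmeas i)), h1,
      tsub_self]
  have hMpos : ∀ j, ∀ᵐ ω ∂(ℙ : Measure Ω), 0 < M j ω := by
    intro j
    have h1 : ℙ {ω | M j ω > 0} = 1 := by
      rw [hMexp j 0 le_rfl]; simp
    rw [ae_iff]
    have hs : {ω | ¬ 0 < M j ω} = {ω | M j ω > 0}ᶜ := rfl
    rw [hs, prob_compl_eq_one_sub (measurableSet_lt measurable_const (hMmeas j)), h1,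
      tsub_self]
  have hG : ∀ᵐ ω ∂(ℙ : Measure Ω), (∀ i, 0 < L i ω) ∧ (∀ j, 0 < M j ω) :=
    (ae_all_iff.mpr hLpos).and (ae_all_iff.mpr hMpos)
  -- a.e. identification of the event
  have hPT : ℙ {ω | (∃ i : Fin t, R_U ≤ W * Real.logb 2 (1 + snr * L i ω)) ∧
        ((∃ i : Fin t, R_X ≤ W * Real.logb 2 (1 + snr * L i ω)) ∨
          (∃ j : Fin m, R_X ≤ W * Real.logb 2 (1 + snr * M j ω)))}
      = ℙ (A ∩ (B ∪ C)) := by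
    apply measure_congr
    rw [Filter.eventuallyEq_set]
    filter_upwards [hG] with ω hω
    have kU : ∀ i : Fin t, (R_U ≤ W * Real.logb 2 (1 + snr * L i ω)) ↔ a ≤ L i ω :=
      fun i => by rw [ha_def]; exact key R_U _ hRU (hω.1 i)
    have kXL : ∀ i : Fin t, (R_X ≤ W * Real.logb 2 (1 + snr * L i ω)) ↔ b ≤ L i ω :=
      fun i => by rw [hb_def]; exact key R_X _ hRX0 (hω.1 i)
    have kXM : ∀ j : Fin m, (R_X ≤ W * Real.logb 2 (1 + snr * M j ω)) ↔ b ≤ M j ω :=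
      fun j => by rw [hb_def]; exact key R_X _ hRX0 (hω.2 j)
    rw [hA_def, hB_def, hC_def]
    simp only [Set.mem_setOf_eq, Set.mem_inter_iff, Set.mem_union, Set.mem_iUnion]
    exact and_congr (exists_congr kU) (or_congr (exists_congr kXL) (exists_congr kXM))
  -- the independence product rule
  have prod_rule : ∀ (S : Finset (Fin t ⊕ Fin m)) (c : Fin t ⊕ Fin m → ℝ), (∀ u, 0 ≤ c u) →
      ℙ (⋂ u ∈ S, {ω | Sum.elim L M u ω < c u})
        = ∏ u ∈ S, ENNReal.ofReal (1 - Real.exp (-(c u))) := by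
    intro S c hc
    rw [hindep.meas_biInter (s := fun u => {ω | Sum.elim L M u ω < c u})
      (fun u _ => ⟨Set.Iio (c u), measurableSet_Iio, rfl⟩)]
    refine Finset.prod_congr rfl fun u _ => ?_
    rcases u with i | j
    · exact exp_cdf (hLmeas i) (hLexp i) (hc _)
    · exact exp_cdf (hMmeas j) (hMexp j) (hc _)
  have prod_L : ∀ c : ℝ, 0 ≤ c → ℙ (⋂ i : Fin t, {ω | L i ω < c})
      = ENNReal.ofReal ((1 - Real.exp (-c)) ^ t) := by
    intro c hc
    have h := prod_rule (Finset.univ.map ⟨Sum.inl, Sum.inl_injective⟩)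
      (Sum.elim (fun _ => c) (fun _ => 1)) (by rintro (i | j) <;> simp [hc])
    rw [show (⋂ u ∈ Finset.univ.map (⟨Sum.inl, Sum.inl_injective⟩ : Fin t ↪ Fin t ⊕ Fin m),
        {ω | Sum.elim L M u ω < Sum.elim (fun _ => c) (fun _ => (1 : ℝ)) u})
        = ⋂ i : Fin t, {ω | L i ω < c} from by ext ω; simp] at h
    rw [h, Finset.prod_map]
    simp only [Function.Embedding.coeFn_mk, Sum.elim_inl]
    rw [Finset.prod_const, Finset.card_univ, Fintype.card_fin,
      ← ENNReal.ofReal_pow (by linarith [hexp1 c hc])]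
  have prod_all : ∀ c₁ c₂ : ℝ, 0 ≤ c₁ → 0 ≤ c₂ →
      ℙ ((⋂ i : Fin t, {ω | L i ω < c₁}) ∩ ⋂ j : Fin m, {ω | M j ω < c₂})
        = ENNReal.ofReal ((1 - Real.exp (-c₁)) ^ t * (1 - Real.exp (-c₂)) ^ m) := by
    intro c₁ c₂ hc₁ hc₂
    have h := prod_rule Finset.univ (Sum.elim (fun _ => c₁) (fun _ => c₂))
      (by rintro (i | j) <;> simp [hc₁, hc₂])
    rw [show (⋂ u ∈ (Finset.univ : Finset (Fin t ⊕ Fin m)),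
        {ω | Sum.elim L M u ω < Sum.elim (fun _ => c₁) (fun _ => c₂) u})
        = (⋂ i : Fin t, {ω | L i ω < c₁}) ∩ ⋂ j : Fin m, {ω | M j ω < c₂} from by
          ext ω
          simp [Set.mem_iInter, Sum.forall, Set.mem_inter_iff]] at h
    rw [h, Fintype.prod_sum_type]
    simp only [Sum.elim_inl, Sum.elim_inr]
    rw [Finset.prod_const, Finset.prod_const, Finset.card_univ, Finset.card_univ,
      Fintype.card_fin, Fintype.card_fin,
      ← ENNReal.ofReal_pow (by linarith [hexp1 c₁ hc₁]),
      ← ENNReal.ofReal_pow (by linarith [hexp1 c₂ hc₂]), ← ENNReal.ofReal_mul (pow_nonneg (by linarith [hexp1 c₁ hc₁]) t)]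
  -- complements as intersections
  have hAc : ℙ Aᶜ = ENNReal.ofReal (p ^ t) := by
    have hs : Aᶜ = ⋂ i : Fin t, {ω | L i ω < a} := by
      rw [hA_def, Set.compl_iUnion]; ext ω; simp [not_le]
    rw [hs, prod_L a ha0, hp]
  have hBc : ℙ Bᶜ = ENNReal.ofReal (q ^ t) := by
    have hs : Bᶜ = ⋂ i : Fin t, {ω | L i ω < b} := by
      rw [hB_def, Set.compl_iUnion]; ext ω; simp [not_le]
    rw [hs, prod_L b hb0, hq]
  have hBcCc : ℙ (Bᶜ ∩ Cᶜ) = ENNReal.ofReal (q ^ t * q ^ m) := by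
    have hs : Bᶜ ∩ Cᶜ = (⋂ i : Fin t, {ω | L i ω < b}) ∩ ⋂ j : Fin m, {ω | M j ω < b} := by
      rw [hB_def, hC_def, Set.compl_iUnion, Set.compl_iUnion]
      ext ω; simp [not_le]
    rw [hs, prod_all b b hb0 hb0, hq]
  have hAcCc : ℙ (Aᶜ ∩ Cᶜ) = ENNReal.ofReal (p ^ t * q ^ m) := by
    have hs : Aᶜ ∩ Cᶜ = (⋂ i : Fin t, {ω | L i ω < a}) ∩ ⋂ j : Fin m, {ω | M j ω < b} := by
      rw [hA_def, hC_def, Set.compl_iUnion, Set.compl_iUnion]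
      ext ω; simp [not_le]
    rw [hs, prod_all a b ha0 hb0, hp, hq]
  -- probabilities of the pieces
  have hPB : ℙ B = ENNReal.ofReal (1 - q ^ t) := by
    rw [← compl_compl B, prob_compl_eq_one_sub hmB.compl, hBc, ← ENNReal.ofReal_one,
      ← ENNReal.ofReal_sub _ (pow_nonneg hq0 t)]
  have hPBcC : ℙ (Bᶜ ∩ C) = ENNReal.ofReal (q ^ t - q ^ t * q ^ m) := by
    have hs : Bᶜ ∩ C = Bᶜ \ (Bᶜ ∩ Cᶜ) := by
      ext ω
      simp only [Set.mem_inter_iff, Set.mem_diff, Set.mem_compl_iff]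
      tauto
    rw [hs, measure_diff Set.inter_subset_left
      (hmB.compl.inter hmC.compl).nullMeasurableSet (measure_ne_top _ _), hBc, hBcCc,
      ← ENNReal.ofReal_sub _ (mul_nonneg (pow_nonneg hq0 t) (pow_nonneg hq0 m))]
  have hPAcC : ℙ (Aᶜ ∩ C) = ENNReal.ofReal (p ^ t - p ^ t * q ^ m) := by
    have hs : Aᶜ ∩ C = Aᶜ \ (Aᶜ ∩ Cᶜ) := by
      ext ω
      simp only [Set.mem_inter_iff, Set.mem_diff, Set.mem_compl_iff]
      tauto
    rw [hs, measure_diff Set.inter_subset_left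
      (hmA.compl.inter hmC.compl).nullMeasurableSet (measure_ne_top _ _), hAc, hAcCc,
      ← ENNReal.ofReal_sub _ (mul_nonneg (pow_nonneg hp0 t) (pow_nonneg hq0 m))]
  have hACB : ℙ ((A ∩ C) \ B)
      = ENNReal.ofReal ((q ^ t - q ^ t * q ^ m) - (p ^ t - p ^ t * q ^ m)) := by
    have hs : (A ∩ C) \ B = (Bᶜ ∩ C) \ (Aᶜ ∩ C) := by
      ext ω
      simp only [Set.mem_inter_iff, Set.mem_diff, Set.mem_compl_iff]
      tauto
    have hsub : Aᶜ ∩ C ⊆ Bᶜ ∩ C := fun ω hω => ⟨fun hB => hω.1 (hBA hB), hω.2⟩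
    have hnn : 0 ≤ p ^ t - p ^ t * q ^ m := by
      have h2 : q ^ m ≤ 1 := pow_le_one₀ hq0 hq1
      have h3 : p ^ t * q ^ m ≤ p ^ t :=
        mul_le_of_le_one_right (pow_nonneg hp0 t) h2
      linarith
    rw [hs, measure_diff hsub (hmA.compl.inter hmC).nullMeasurableSet (measure_ne_top _ _),
      hPBcC, hPAcC, ← ENNReal.ofReal_sub _ hnn]
  -- assemble
  have hsplit : A ∩ (B ∪ C) = B ∪ ((A ∩ C) \ B) := by
    ext ω
    simp only [Set.mem_inter_iff, Set.mem_union, Set.mem_diff]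
    constructor
    · rintro ⟨hA, hB | hC⟩
      · exact Or.inl hB
      · by_cases hB : ω ∈ B
        · exact Or.inl hB
        · exact Or.inr ⟨⟨hA, hC⟩, hB⟩
    · rintro (hB | ⟨⟨hA, hC⟩, hB⟩)
      · exact ⟨hBA hB, Or.inl hB⟩
      · exact ⟨hA, Or.inr hC⟩
  have hnn1 : (0 : ℝ) ≤ 1 - q ^ t := by
    have := pow_le_one₀ hq0 hq1 (n := t)
    linarith
  have hnn2 : (0 : ℝ) ≤ (q ^ t - q ^ t * q ^ m) - (p ^ t - p ^ t * q ^ m) := by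
    have h1 : p ^ t ≤ q ^ t := pow_le_pow_left₀ hp0 hpq t
    have h2 : q ^ m ≤ 1 := pow_le_one₀ hq0 hq1
    have h3 : 0 ≤ p ^ t := pow_nonneg hp0 t
    nlinarith
  rw [xor_sum_identity t m hp1, hPT, hsplit,
    measure_union disjoint_sdiff_self_right ((hmA.inter hmC).diff hmB), hPB, hACB,
    ← ENNReal.ofReal_add hnn1 hnn2]
end

section
/- Let W > 0, s > 0 and 0 < R_U ≤ R_X ≤ R_D with R_U < R_D, and let C₁, …, C_n be i.i.d. link capacities, each distributed as W·log₂(1 + s·X) with X exponential of rate 1. Then for all nonnegative integers a, b, b̃ with a + b ≤ n and b̃ ≤ b, the probability that exactly a of the capacities satisfy C_i ≥ R_D, exactly b of them satisfy R_U ≤ C_i < R_D, and exactly b̃ of them satisfy R_X ≤ C_i < R_D, equals B(n, a, p(R_D)) · B(n−a, b, p(R_U)/p(R_D)) · B(b, b̃, (p(R_X) − p(R_U))/(p(R_D) − p(R_U))). -/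
open MeasureTheory ProbabilityTheory

section Aux

open Filter Finset

/-- For an "exponential of rate 1" tail, the closed tail has the same probability. -/
lemma XorCoWAux.tail_ge {Ω : Type*} [MeasureSpace Ω] [IsProbabilityMeasure (ℙ : Measure Ω)]
    (f : Ω → ℝ) (hf : Measurable f)
    (h : ∀ x : ℝ, 0 ≤ x → ℙ {ω | f ω > x} = ENNReal.ofReal (Real.exp (-x)))
    (x : ℝ) (hx : 0 < x) : ℙ {ω | x ≤ f ω} = ENNReal.ofReal (Real.exp (-x)) := by
  set s : ℕ → Set Ω := fun m => {ω | f ω > x - x / (m + 1)} with hs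
  have hmeas : ∀ m, MeasurableSet (s m) := fun m => measurableSet_lt measurable_const hf
  have hnonneg : ∀ m : ℕ, (0:ℝ) ≤ x - x / (m + 1) := by
    intro m
    have h1 : x / (m + 1) ≤ x / 1 := by
      apply div_le_div_of_nonneg_left hx.le one_pos
      exact_mod_cast Nat.le_add_left 1 m
    simp at h1; linarith
  have hanti : Antitone s := by
    intro m m' hmm ω hω
    have : x / (m' + 1 : ℝ) ≤ x / (m + 1 : ℝ) := by
      apply div_le_div_of_nonneg_left hx.le (by positivity)
      exact_mod_cast by omega
    simp only [hs, Set.mem_setOf_eq] at *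
    linarith
  have hinter : (⋂ m, s m) = {ω | x ≤ f ω} := by
    ext ω
    simp only [Set.mem_iInter, hs, Set.mem_setOf_eq]
    constructor
    · intro hω
      by_contra hlt
      push_neg at hlt
      obtain ⟨m, hm⟩ := exists_nat_gt (x / (x - f ω))
      have hxf : 0 < x - f ω := by linarith
      have h2 : x / (m + 1 : ℝ) < x - f ω := by
        rw [div_lt_iff₀ (by positivity)]
        have : x / (x - f ω) < m + 1 := by linarith
        nlinarith [mul_lt_mul_of_pos_right this hxf,
          div_mul_cancel₀ x (ne_of_gt hxf)]
      have := hω m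
      linarith
    · intro hω m
      have : 0 < x / (m+1 : ℝ) := by positivity
      linarith
  have htend := tendsto_measure_iInter_atTop (μ := (ℙ : Measure Ω))
    (fun m => (hmeas m).nullMeasurableSet) hanti ⟨0, measure_ne_top _ _⟩
  rw [hinter] at htend
  have htend2 : Tendsto ((ℙ : Measure Ω) ∘ s) atTop (nhds (ENNReal.ofReal (Real.exp (-x)))) := by
    have heq : ∀ m : ℕ, ((ℙ : Measure Ω) ∘ s) m = ENNReal.ofReal (Real.exp (-(x - x / (m+1)))) := by
      intro m; exact h _ (hnonneg m)
    rw [show ((ℙ : Measure Ω) ∘ s) = fun m : ℕ => ENNReal.ofReal (Real.exp (-(x - x / (m+1)))) from funext heq]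
    have h0 : Tendsto (fun m : ℕ => x - x / (m+1)) atTop (nhds x) := by
      have := tendsto_one_div_add_atTop_nhds_zero_nat (𝕜 := ℝ)
      have h2 : Tendsto (fun m : ℕ => x / (m+1)) atTop (nhds 0) := by
        have := this.const_mul x
        simpa [div_eq_mul_inv, mul_comm] using this
      simpa using (tendsto_const_nhds (x := x)).sub h2
    exact (ENNReal.continuous_ofReal.tendsto _).comp
      ((Real.continuous_exp.tendsto _).comp (h0.neg))
  exact tendsto_nhds_unique htend htend2

/-- Counting functions `Fin n → Fin 4` with prescribed fiber cardinalities. -/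
lemma XorCoWAux.count_funs (n a c d : ℕ) :
    (Finset.univ.filter fun f : Fin n → Fin 4 =>
       (Finset.univ.filter fun i => f i = 0).card = a ∧
       (Finset.univ.filter fun i => f i = 1).card = c ∧
       (Finset.univ.filter fun i => f i = 2).card = d).card
    = n.choose a * ((n-a).choose c * ((n-a-c).choose d)) := by
  classical
  set S := (Finset.univ.filter fun f : Fin n → Fin 4 =>
       (Finset.univ.filter fun i => f i = 0).card = a ∧
       (Finset.univ.filter fun i => f i = 1).card = c ∧
       (Finset.univ.filter fun i => f i = 2).card = d) with hS
  have step1 : S.card = ∑ A ∈ (univ : Finset (Fin n)).powersetCard a,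
      (S.filter fun f => (Finset.univ.filter fun i => f i = 0) = A).card := by
    apply card_eq_sum_card_fiberwise
    intro f hf
    rw [hS, Finset.mem_coe, mem_filter] at hf
    rw [Finset.mem_coe, mem_powersetCard_univ]
    exact hf.2.1
  rw [step1]
  have step2 : ∀ A ∈ (univ : Finset (Fin n)).powersetCard a,
      (S.filter fun f => (Finset.univ.filter fun i => f i = 0) = A).card
      = (n-a).choose c * ((n-a-c).choose d) := by
    intro A hA
    rw [mem_powersetCard_univ] at hA
    have hAcompl : Aᶜ.card = n - a := by
      rw [card_compl, hA]; simp
    have step2a : (S.filter fun f => (Finset.univ.filter fun i => f i = 0) = A).card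
        = ∑ B ∈ Aᶜ.powersetCard c,
          ((S.filter fun f => (Finset.univ.filter fun i => f i = 0) = A).filter
            fun f => (Finset.univ.filter fun i => f i = 1) = B).card := by
      apply card_eq_sum_card_fiberwise
      intro f hf
      rw [Finset.mem_coe, mem_filter, hS, mem_filter] at hf
      rw [Finset.mem_coe, mem_powersetCard]
      refine ⟨?_, hf.1.2.2.1⟩
      intro i hi
      rw [mem_filter] at hi
      rw [mem_compl, ← hf.2]
      simp only [mem_filter, mem_univ, true_and, hi.2]
      simp
    rw [step2a]
    have step2b : ∀ B ∈ Aᶜ.powersetCard c,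
        ((S.filter fun f => (Finset.univ.filter fun i => f i = 0) = A).filter
            fun f => (Finset.univ.filter fun i => f i = 1) = B).card
        = (n-a-c).choose d := by
      intro B hB
      rw [mem_powersetCard] at hB
      obtain ⟨hBsub, hBcard⟩ := hB
      have hcardAB : (Aᶜ \ B).card = n - a - c := by
        rw [card_sdiff_of_subset hBsub, hAcompl, hBcard]
      rw [← hcardAB, ← card_powersetCard]
      apply card_bij (fun f _ => (Finset.univ.filter fun i => f i = 2))
      · -- maps to
        intro f hf
        rw [mem_filter, mem_filter, hS, mem_filter] at hf
        rw [mem_powersetCard]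
        refine ⟨?_, hf.1.1.2.2.2⟩
        intro i hi
        rw [mem_filter] at hi
        rw [Finset.mem_sdiff, mem_compl, ← hf.1.2, ← hf.2]
        constructor <;> · simp only [mem_filter, mem_univ, true_and, hi.2]; simp
      · -- injective
        intro f hf g hg hfg
        rw [mem_filter, mem_filter, hS, mem_filter] at hf hg
        funext i
        have h0 : (f i = 0) ↔ (g i = 0) := by
          rw [show ((f i = 0) ↔ i ∈ A) from by rw [← hf.1.2]; simp,
            show ((g i = 0) ↔ i ∈ A) from by rw [← hg.1.2]; simp]
        have h1 : (f i = 1) ↔ (g i = 1) := by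
          rw [show ((f i = 1) ↔ i ∈ B) from by rw [← hf.2]; simp,
            show ((g i = 1) ↔ i ∈ B) from by rw [← hg.2]; simp]
        have h2 : (f i = 2) ↔ (g i = 2) := by
          have := Finset.ext_iff.mp hfg i
          simpa using this
        have hfv : (f i).val < 4 := (f i).isLt
        have hgv : (g i).val < 4 := (g i).isLt
        simp only [Fin.ext_iff, show ((0:Fin 4):ℕ) = 0 from rfl,
          show ((1:Fin 4):ℕ) = 1 from rfl, show ((2:Fin 4):ℕ) = 2 from rfl] at h0 h1 h2 ⊢
        clear * - h0 h1 h2 hfv hgv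
        omega
      · -- surjective
        intro C hC
        rw [mem_powersetCard] at hC
        obtain ⟨hCsub, hCcard⟩ := hC
        refine ⟨fun i => if i ∈ A then 0 else if i ∈ B then 1 else if i ∈ C then 2 else 3, ?_, ?_⟩
        · have hfib0 : (Finset.univ.filter fun i =>
              (if i ∈ A then (0:Fin 4) else if i ∈ B then 1 else if i ∈ C then 2 else 3) = 0) = A := by
            ext i; simp only [mem_filter, mem_univ, true_and]
            split_ifs with h h' h'' <;> simp_all
          have hfib1 : (Finset.univ.filter fun i =>
              (if i ∈ A then (0:Fin 4) else if i ∈ B then 1 else if i ∈ C then 2 else 3) = 1) = B := by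
            ext i; simp only [mem_filter, mem_univ, true_and]
            split_ifs with h h' h''
            · constructor
              · intro h0; exact absurd h0 (by decide)
              · intro hiB; exact absurd h (mem_compl.mp (hBsub hiB))
            · simp [h']
            · constructor
              · intro h2; exact absurd h2 (by decide)
              · intro hiB; exact absurd hiB h'
            · constructor
              · intro h3; exact absurd h3 (by decide)
              · intro hiB; exact absurd hiB h'
          have hfib2 : (Finset.univ.filter fun i =>
              (if i ∈ A then (0:Fin 4) else if i ∈ B then 1 else if i ∈ C then 2 else 3) = 2) = C := by
            ext i; simp only [mem_filter, mem_univ, true_and]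
            split_ifs with h h' h''
            · simp
              intro hiC
              have := hCsub hiC
              rw [Finset.mem_sdiff, mem_compl] at this
              exact this.1 h
            · simp
              intro hiC
              have := hCsub hiC
              rw [Finset.mem_sdiff] at this
              exact this.2 h'
            · simp [h'']
            · simp [h'']
          rw [mem_filter, mem_filter, hS, mem_filter]
          exact ⟨⟨⟨mem_univ _, by rw [hfib0, hA], by rw [hfib1, hBcard], by rw [hfib2, hCcard]⟩,
            hfib0⟩, hfib1⟩
        · ext i; simp only [mem_filter, mem_univ, true_and]
          split_ifs with h h' h''
          · simp
            intro hiC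
            have := hCsub hiC
            rw [Finset.mem_sdiff, mem_compl] at this
            exact this.1 h
          · simp
            intro hiC
            have := hCsub hiC
            rw [Finset.mem_sdiff] at this
            exact this.2 h'
          · simp [h'']
          · simp [h'']
    rw [sum_congr rfl step2b, sum_const, card_powersetCard, hAcompl, smul_eq_mul]
  rw [sum_congr rfl step2, sum_const, card_powersetCard, card_univ, Fintype.card_fin, smul_eq_mul]

/-- The real-number algebraic identity between the multinomial form and the
iterated-binomial form. -/
lemma XorCoWAux.alg_lemma (eU eX eD : ℝ) (hD : 0 < eD) (h1 : eD ≤ eX) (h2 : eX ≤ eU)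
    (h3 : eU < 1) (hDU : eD < eU) (n a b bt : ℕ) (hab : a + b ≤ n) (hbt : bt ≤ b) :
    ((n.choose a * ((n-a).choose bt * ((n-a-bt).choose (b-bt)))) : ℝ) *
      (eD^a * ((eX-eD)^bt * ((eU-eX)^(b-bt) * (1-eU)^(n-a-b))))
    = binProb n a (1-eD) * binProb (n-a) b ((1-eU)/(1-eD)) *
      binProb b bt (((1-eX)-(1-eU))/((1-eD)-(1-eU))) := by
  obtain ⟨c, rfl⟩ : ∃ c, b = bt + c := ⟨b - bt, by omega⟩
  obtain ⟨m, rfl⟩ : ∃ m, n = a + (bt + c) + m := ⟨n - (a + (bt+c)), by omega⟩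
  have e1 : a + (bt + c) + m - a = bt + c + m := by omega
  have e3 : bt + c - bt = c := by omega
  have e5 : bt + c + m - (bt + c) = m := by omega
  rw [e1, show bt+c+m-bt = c+m by omega, e3, e5]
  have hchoose : ((bt+c+m).choose bt) * ((c+m).choose c)
      = ((bt+c+m).choose (bt+c)) * ((bt+c).choose bt) := by
    have := Nat.choose_mul (n := bt+c+m) (show bt ≤ bt+c by omega)
    rw [show bt+c+m-bt = c+m by omega, show bt+c-bt = c by omega] at this
    omega
  rw [← Nat.cast_mul ((bt+c+m).choose bt), hchoose, Nat.cast_mul]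
  simp only [binProb, e1, e3, e5]
  have hd1 : (1:ℝ) - eD ≠ 0 := by linarith
  have hd2 : (1:ℝ) - eD - (1 - eU) ≠ 0 := by
    intro h; apply absurd hDU; intro _; nlinarith [h]
  have hq2 : (1:ℝ) - (1-eU)/(1-eD) = (eU - eD)/(1-eD) := by field_simp; ring
  have hq3 : (1:ℝ) - ((1-eX)-(1-eU))/((1-eD)-(1-eU)) = (eX - eD)/(eU - eD) := by
    rw [show (1:ℝ)-eD-(1-eU) = eU - eD from by ring] at hd2 ⊢
    field_simp
    ring
  rw [hq2, hq3, show ((1:ℝ)-eX)-(1-eU) = eU - eX from by ring,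
    show ((1:ℝ)-eD)-(1-eU) = eU - eD from by ring]
  have hUDne : eU - eD ≠ 0 := by intro h; nlinarith
  rw [div_pow, div_pow, div_pow, div_pow]
  field_simp
  ring

end Aux

/-- **Joint distribution of the sets `A`, `B` and `B̃` in the XOR-CoW analysis
(case `R_D > R_X ≥ R_U`).**
`C₁,…,C_n` are i.i.d. link capacities `W·log₂(1 + snr·X)`, `X` exponential of
rate 1, and `0 < R_U ≤ R_X ≤ R_D` with `R_U < R_D`.  For `a + b ≤ n` and
`b̃ ≤ b`, the probability that exactly `a` capacities satisfy `C_i ≥ R_D`,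
exactly `b` satisfy `R_U ≤ C_i < R_D`, and exactly `b̃` satisfy
`R_X ≤ C_i < R_D`, equals
`B(n,a,p(R_D))·B(n−a,b,p(R_U)/p(R_D))·B(b,b̃,(p(R_X)−p(R_U))/(p(R_D)−p(R_U)))`. -/
theorem xorCoW_ABBtilde_distribution {Ω : Type*} [MeasureSpace Ω]
    [IsProbabilityMeasure (ℙ : Measure Ω)]
    (n : ℕ) (W snr R_U R_X R_D : ℝ) (hW : 0 < W) (hsnr : 0 < snr)
    (hRU : 0 < R_U) (hUX : R_U ≤ R_X) (hXD : R_X ≤ R_D) (hUD : R_U < R_D)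
    (X : Fin n → Ω → ℝ) (hXmeas : ∀ i, Measurable (X i))
    (hindep : iIndepFun X ℙ)
    (hXexp : ∀ i, ∀ x : ℝ, 0 ≤ x →
      ℙ {ω | X i ω > x} = ENNReal.ofReal (Real.exp (-x)))
    (a b bt : ℕ) (hab : a + b ≤ n) (hbt : bt ≤ b) :
    ℙ {ω | Nat.card {i : Fin n // R_D ≤ W * Real.logb 2 (1 + snr * X i ω)} = a ∧
        Nat.card {i : Fin n // R_U ≤ W * Real.logb 2 (1 + snr * X i ω) ∧
          W * Real.logb 2 (1 + snr * X i ω) < R_D} = b ∧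
        Nat.card {i : Fin n // R_X ≤ W * Real.logb 2 (1 + snr * X i ω) ∧
          W * Real.logb 2 (1 + snr * X i ω) < R_D} = bt} =
      ENNReal.ofReal (binProb n a (outageProb W snr R_D) *
        binProb (n - a) b (outageProb W snr R_U / outageProb W snr R_D) *
        binProb b bt ((outageProb W snr R_X - outageProb W snr R_U) /
          (outageProb W snr R_D - outageProb W snr R_U))) := by
  classical
  set xU : ℝ := ((2:ℝ)^(R_U/W) - 1)/snr with hxU_def
  set xX : ℝ := ((2:ℝ)^(R_X/W) - 1)/snr with hxX_def
  set xD : ℝ := ((2:ℝ)^(R_D/W) - 1)/snr with hxD_def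
  have hgt : ∀ R : ℝ, 0 < R → (1:ℝ) < 2^(R/W) := fun R hR =>
    (Real.one_lt_rpow_iff_of_pos (by norm_num)).mpr (Or.inl ⟨one_lt_two, div_pos hR hW⟩)
  have hxUpos : 0 < xU := div_pos (by linarith [hgt R_U hRU]) hsnr
  have hxXpos : 0 < xX := div_pos (by linarith [hgt R_X (lt_of_lt_of_le hRU hUX)]) hsnr
  have hxDpos : 0 < xD := div_pos (by linarith [hgt R_D (lt_of_lt_of_le hRU (le_trans hUX hXD))]) hsnr
  have hUXx : xU ≤ xX := by
    have : (2:ℝ)^(R_U/W) ≤ 2^(R_X/W) :=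
      Real.rpow_le_rpow_of_exponent_le one_le_two (by gcongr)
    rw [hxU_def, hxX_def]
    gcongr
  have hXDx : xX ≤ xD := by
    have : (2:ℝ)^(R_X/W) ≤ 2^(R_D/W) :=
      Real.rpow_le_rpow_of_exponent_le one_le_two (by gcongr)
    rw [hxX_def, hxD_def]
    gcongr
  have hUDx : xU < xD := by
    have : (2:ℝ)^(R_U/W) < 2^(R_D/W) :=
      Real.rpow_lt_rpow_of_exponent_lt one_lt_two (by gcongr)
    rw [hxU_def, hxD_def, div_lt_div_iff₀ hsnr hsnr]
    nlinarith
  have houtU : outageProb W snr R_U = 1 - Real.exp (-xU) := by rw [outageProb, hxU_def]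
  have houtX : outageProb W snr R_X = 1 - Real.exp (-xX) := by rw [outageProb, hxX_def]
  have houtD : outageProb W snr R_D = 1 - Real.exp (-xD) := by rw [outageProb, hxD_def]
  -- threshold equivalences
  have hthresh : ∀ R t : ℝ, 0 < t →
      (R ≤ W * Real.logb 2 (1 + snr * t) ↔ ((2:ℝ)^(R/W) - 1)/snr ≤ t) := by
    intro R t ht
    have hy : (0:ℝ) < 1 + snr * t := by nlinarith
    rw [show (R ≤ W * Real.logb 2 (1 + snr * t)) ↔ (R/W ≤ Real.logb 2 (1 + snr * t)) from by
      rw [div_le_iff₀ hW, mul_comm]]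
    rw [Real.le_logb_iff_rpow_le one_lt_two hy, div_le_iff₀ hsnr]
    constructor <;> intro h <;> nlinarith
  have hthreshlt : ∀ R t : ℝ, 0 < t →
      (W * Real.logb 2 (1 + snr * t) < R ↔ t < ((2:ℝ)^(R/W) - 1)/snr) := by
    intro R t ht
    rw [← not_le, ← not_le, not_iff_not]
    exact hthresh R t ht
  -- exponentials
  set eU : ℝ := Real.exp (-xU) with heU_def
  set eX : ℝ := Real.exp (-xX) with heX_def
  set eD : ℝ := Real.exp (-xD) with heD_def
  have heDpos : 0 < eD := Real.exp_pos _
  have heDX : eD ≤ eX := Real.exp_le_exp.mpr (by linarith)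
  have heXU : eX ≤ eU := Real.exp_le_exp.mpr (by linarith)
  have heDU : eD < eU := Real.exp_lt_exp.mpr (by linarith)
  have heU1 : eU < 1 := by
    rw [heU_def, ← Real.exp_zero]
    exact Real.exp_lt_exp.mpr (by linarith)
  -- the category map
  set cat : ℝ → Fin 4 := fun t => if xD ≤ t then 0 else if xX ≤ t then 1 else
    if xU ≤ t then 2 else 3 with hcat_def
  have hcat0 : ∀ t, (cat t = 0 ↔ xD ≤ t) := by
    intro t
    rw [hcat_def]
    dsimp only
    split_ifs with h1 h2 h3
    · simpa using h1
    · constructor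
      · intro h; exact absurd h (by decide)
      · intro h; exact absurd h h1
    · constructor
      · intro h; exact absurd h (by decide)
      · intro h; exact absurd h h1
    · constructor
      · intro h; exact absurd h (by decide)
      · intro h; exact absurd h h1
  have hcat1 : ∀ t, (cat t = 1 ↔ (xX ≤ t ∧ t < xD)) := by
    intro t
    rw [hcat_def]
    dsimp only
    split_ifs with h1 h2 h3
    · constructor
      · intro h; exact absurd h (by decide)
      · rintro ⟨-, h⟩; exact absurd h1 (not_le.mpr h)
    · exact ⟨fun _ => ⟨h2, not_le.mp h1⟩, fun _ => rfl⟩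
    · constructor
      · intro h; exact absurd h (by decide)
      · rintro ⟨h, -⟩; exact absurd h h2
    · constructor
      · intro h; exact absurd h (by decide)
      · rintro ⟨h, -⟩; exact absurd h h2
  have hcat2 : ∀ t, (cat t = 2 ↔ (xU ≤ t ∧ t < xX)) := by
    intro t
    rw [hcat_def]
    dsimp only
    split_ifs with h1 h2 h3
    · constructor
      · intro h; exact absurd h (by decide)
      · rintro ⟨-, h⟩; exact absurd (le_trans hXDx h1) (not_le.mpr h)
    · constructor
      · intro h; exact absurd h (by decide)
      · rintro ⟨-, h⟩; exact absurd h2 (not_le.mpr h)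
    · exact ⟨fun _ => ⟨h3, not_le.mp h2⟩, fun _ => rfl⟩
    · constructor
      · intro h; exact absurd h (by decide)
      · rintro ⟨h, -⟩; exact absurd h h3
  have hcat3 : ∀ t, (cat t = 3 ↔ t < xU) := by
    intro t
    rw [hcat_def]
    dsimp only
    split_ifs with h1 h2 h3
    · constructor
      · intro h; exact absurd h (by decide)
      · intro h; exact absurd (le_trans (le_trans hUXx hXDx) h1) (not_le.mpr h)
    · constructor
      · intro h; exact absurd h (by decide)
      · intro h; exact absurd (le_trans hUXx h2) (not_le.mpr h)
    · constructor
      · intro h; exact absurd h (by decide)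
      · intro h; exact absurd h3 (not_le.mpr h)
    · exact ⟨fun _ => not_le.mp h3, fun _ => rfl⟩
  have hpre0 : cat ⁻¹' {(0:Fin 4)} = Set.Ici xD := by
    ext t; simp [Set.mem_preimage, hcat0 t]
  have hpre1 : cat ⁻¹' {(1:Fin 4)} = Set.Ico xX xD := by
    ext t; simp [Set.mem_preimage, hcat1 t, Set.mem_Ico]
  have hpre2 : cat ⁻¹' {(2:Fin 4)} = Set.Ico xU xX := by
    ext t; simp [Set.mem_preimage, hcat2 t, Set.mem_Ico]
  have hpre3 : cat ⁻¹' {(3:Fin 4)} = Set.Iio xU := by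
    ext t; simp [Set.mem_preimage, hcat3 t]
  have hcatmeas : Measurable cat := by
    apply measurable_to_countable'
    intro k
    fin_cases k
    · exact (show cat ⁻¹' {(0:Fin 4)} = Set.Ici xD from hpre0) ▸ measurableSet_Ici
    · exact (show cat ⁻¹' {(1:Fin 4)} = Set.Ico xX xD from hpre1) ▸ measurableSet_Ico
    · exact (show cat ⁻¹' {(2:Fin 4)} = Set.Ico xU xX from hpre2) ▸ measurableSet_Ico
    · exact (show cat ⁻¹' {(3:Fin 4)} = Set.Iio xU from hpre3) ▸ measurableSet_Iio
  -- basic tail probabilities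
  have hIci : ∀ (i : Fin n) (y : ℝ), 0 < y →
      ℙ ((X i) ⁻¹' Set.Ici y) = ENNReal.ofReal (Real.exp (-y)) := by
    intro i y hy
    have := XorCoWAux.tail_ge (X i) (hXmeas i) (hXexp i) y hy
    convert this using 2
    rfl
  have hIco : ∀ (i : Fin n) (u v : ℝ), 0 < u → u ≤ v →
      ℙ ((X i) ⁻¹' Set.Ico u v) = ENNReal.ofReal (Real.exp (-u) - Real.exp (-v)) := by
    intro i u v hu huv
    have hv : 0 < v := lt_of_lt_of_le hu huv
    have hsplit : (X i) ⁻¹' Set.Ici u = (X i) ⁻¹' Set.Ico u v ∪ (X i) ⁻¹' Set.Ici v := by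
      rw [← Set.preimage_union, Set.Ico_union_Ici_eq_Ici huv]
    have hdisj : Disjoint ((X i) ⁻¹' Set.Ico u v) ((X i) ⁻¹' Set.Ici v) := by
      apply Disjoint.preimage
      apply Set.disjoint_left.mpr
      rintro t ⟨-, ht2⟩ ht3
      exact absurd ht3 (not_le.mpr ht2)
    have hm1 : MeasurableSet ((X i) ⁻¹' Set.Ici v) := (hXmeas i) measurableSet_Ici
    have hunion := measure_union (μ := (ℙ : Measure Ω)) hdisj hm1
    have heq : ENNReal.ofReal (Real.exp (-u)) =
        ℙ ((X i) ⁻¹' Set.Ico u v) + ENNReal.ofReal (Real.exp (-v)) := by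
      rw [← hIci i u hu, hsplit, hunion, hIci i v hv]
    have hle : Real.exp (-v) ≤ Real.exp (-u) := Real.exp_le_exp.mpr (by linarith)
    have hsum : ENNReal.ofReal (Real.exp (-u) - Real.exp (-v)) + ENNReal.ofReal (Real.exp (-v))
        = ENNReal.ofReal (Real.exp (-u)) := by
      rw [← ENNReal.ofReal_add (by linarith) (Real.exp_nonneg _)]
      ring_nf
    have h1 : ENNReal.ofReal (Real.exp (-v)) + ℙ ((X i) ⁻¹' Set.Ico u v)
        = ENNReal.ofReal (Real.exp (-v)) + ENNReal.ofReal (Real.exp (-u) - Real.exp (-v)) := by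
      rw [add_comm (ENNReal.ofReal (Real.exp (-v))), add_comm (ENNReal.ofReal (Real.exp (-v)))]
      rw [hsum, ← heq]
    exact (ENNReal.add_right_inj ENNReal.ofReal_ne_top).mp h1
  have hIio : ∀ (i : Fin n) (u : ℝ), 0 < u →
      ℙ ((X i) ⁻¹' Set.Iio u) = ENNReal.ofReal (1 - Real.exp (-u)) := by
    intro i u hu
    have h1 : (X i) ⁻¹' Set.Iio u = ((X i) ⁻¹' Set.Ici u)ᶜ := by
      rw [← Set.preimage_compl, Set.compl_Ici]
    rw [h1, measure_compl ((hXmeas i) measurableSet_Ici) (measure_ne_top _ _), measure_univ,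
      hIci i u hu, ← ENNReal.ofReal_one, ← ENNReal.ofReal_sub _ (Real.exp_nonneg _)]
  -- category probabilities
  set p : Fin 4 → ℝ := ![eD, eX - eD, eU - eX, 1 - eU] with hp_def
  have hpnonneg : ∀ k, 0 ≤ p k := by
    intro k
    fin_cases k <;> simp [hp_def] <;> linarith
  have hkey : ∀ (i : Fin n) (k : Fin 4), ℙ ((X i) ⁻¹' (cat ⁻¹' {k})) = ENNReal.ofReal (p k) := by
    intro i k
    fin_cases k
    · show ℙ ((X i) ⁻¹' (cat ⁻¹' {(0 : Fin 4)})) = ENNReal.ofReal (p (0 : Fin 4))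
      rw [hpre0, hIci i xD hxDpos]
      simp [hp_def, heD_def]
    · show ℙ ((X i) ⁻¹' (cat ⁻¹' {(1 : Fin 4)})) = ENNReal.ofReal (p (1 : Fin 4))
      rw [hpre1, hIco i xX xD hxXpos hXDx]
      simp [hp_def, heD_def, heX_def]
    · show ℙ ((X i) ⁻¹' (cat ⁻¹' {(2 : Fin 4)})) = ENNReal.ofReal (p (2 : Fin 4))
      rw [hpre2, hIco i xU xX hxUpos hUXx]
      simp [hp_def, heU_def, heX_def]
    · show ℙ ((X i) ⁻¹' (cat ⁻¹' {(3 : Fin 4)})) = ENNReal.ofReal (p (3 : Fin 4))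
      rw [hpre3, hIio i xU hxUpos]
      simp [hp_def, heU_def]
  -- almost surely all gains are positive
  have hG : ∀ᵐ ω ∂(ℙ : Measure Ω), ∀ i, 0 < X i ω := by
    rw [ae_all_iff]
    intro i
    have h1 : ℙ {ω | X i ω > 0} = 1 := by
      rw [hXexp i 0 le_rfl]; simp
    rw [ae_iff]
    have h2 : {ω | ¬ 0 < X i ω} = {ω | X i ω > 0}ᶜ := by ext ω; simp
    rw [h2, measure_compl (measurableSet_lt measurable_const (hXmeas i)) (measure_ne_top _ _),
      measure_univ, h1, tsub_self]
  -- the index-pattern finset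
  set S : Finset (Fin n → Fin 4) := Finset.univ.filter (fun f =>
      (Finset.univ.filter fun i => f i = 0).card = a ∧
      (Finset.univ.filter fun i => f i = 1).card = bt ∧
      (Finset.univ.filter fun i => f i = 2).card = b - bt) with hS_def
  set E' : Set Ω := ⋃ f ∈ S, {ω | ∀ i, cat (X i ω) = f i} with hE'_def
  have hae : {ω | Nat.card {i : Fin n // R_D ≤ W * Real.logb 2 (1 + snr * X i ω)} = a ∧
        Nat.card {i : Fin n // R_U ≤ W * Real.logb 2 (1 + snr * X i ω) ∧
          W * Real.logb 2 (1 + snr * X i ω) < R_D} = b ∧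
        Nat.card {i : Fin n // R_X ≤ W * Real.logb 2 (1 + snr * X i ω) ∧
          W * Real.logb 2 (1 + snr * X i ω) < R_D} = bt} =ᵐ[(ℙ : Measure Ω)] E' := by
    rw [Filter.eventuallyEq_set]
    filter_upwards [hG] with ω hω
    have hc0 : Nat.card {i : Fin n // R_D ≤ W * Real.logb 2 (1 + snr * X i ω)}
        = (Finset.univ.filter fun i => cat (X i ω) = 0).card := by
      rw [Nat.card_eq_fintype_card, Fintype.card_subtype]
      apply congrArg Finset.card
      apply Finset.filter_congr
      intro i _
      rw [hcat0 (X i ω)]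
      exact hthresh R_D (X i ω) (hω i)
    have hcsum : Nat.card {i : Fin n // R_U ≤ W * Real.logb 2 (1 + snr * X i ω) ∧
          W * Real.logb 2 (1 + snr * X i ω) < R_D}
        = (Finset.univ.filter fun i => cat (X i ω) = 1).card
          + (Finset.univ.filter fun i => cat (X i ω) = 2).card := by
      rw [Nat.card_eq_fintype_card, Fintype.card_subtype]
      rw [show (Finset.univ.filter fun i : Fin n =>
          R_U ≤ W * Real.logb 2 (1 + snr * X i ω) ∧ W * Real.logb 2 (1 + snr * X i ω) < R_D)
          = Finset.univ.filter fun i => (cat (X i ω) = 1 ∨ cat (X i ω) = 2) from ?_]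
      · rw [Finset.filter_or]
        apply Finset.card_union_of_disjoint
        apply Finset.disjoint_left.mpr
        intro i hi1 hi2
        rw [Finset.mem_filter] at hi1 hi2
        rw [hi1.2] at hi2
        exact absurd hi2.2 (by decide)
      · apply Finset.filter_congr
        intro i _
        rw [hcat1 (X i ω), hcat2 (X i ω), hthresh R_U _ (hω i), hthreshlt R_D _ (hω i)]
        constructor
        · rintro ⟨h1, h2⟩
          by_cases hx : xX ≤ X i ω
          · exact Or.inl ⟨hx, h2⟩
          · exact Or.inr ⟨h1, not_le.mp hx⟩
        · rintro (⟨h1, h2⟩ | ⟨h1, h2⟩)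
          · exact ⟨le_trans hUXx h1, h2⟩
          · exact ⟨h1, lt_of_lt_of_le h2 hXDx⟩
    have hc1 : Nat.card {i : Fin n // R_X ≤ W * Real.logb 2 (1 + snr * X i ω) ∧
          W * Real.logb 2 (1 + snr * X i ω) < R_D}
        = (Finset.univ.filter fun i => cat (X i ω) = 1).card := by
      rw [Nat.card_eq_fintype_card, Fintype.card_subtype]
      apply congrArg Finset.card
      apply Finset.filter_congr
      intro i _
      rw [hcat1 (X i ω), hthresh R_X _ (hω i), hthreshlt R_D _ (hω i)]
    simp only [Set.mem_setOf_eq, hE'_def, Set.mem_iUnion, exists_prop]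
    rw [hc0, hcsum, hc1]
    constructor
    · rintro ⟨h1, h2, h3⟩
      refine ⟨fun i => cat (X i ω), ?_, fun i => rfl⟩
      rw [hS_def, Finset.mem_filter]
      refine ⟨Finset.mem_univ _, h1, h3, ?_⟩
      show (Finset.univ.filter fun i => cat (X i ω) = 2).card = b - bt
      omega
    · rintro ⟨f, hfS, hf⟩
      rw [hS_def, Finset.mem_filter] at hfS
      have hfilter : ∀ k : Fin 4, (Finset.univ.filter fun i => cat (X i ω) = k)
          = (Finset.univ.filter fun i => f i = k) := by
        intro k
        apply Finset.filter_congr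
        intro i _
        rw [hf i]
      rw [hfilter 0, hfilter 1, hfilter 2]
      refine ⟨hfS.2.1, ?_, hfS.2.2.1⟩
      omega
  rw [measure_congr hae]
  -- decompose E' into atoms
  have hWf : ∀ f : Fin n → Fin 4, {ω | ∀ i, cat (X i ω) = f i}
      = ⋂ i, (X i) ⁻¹' (cat ⁻¹' {f i}) := by
    intro f
    ext ω
    simp [Set.mem_iInter]
  have hmeasW : ∀ f : Fin n → Fin 4, MeasurableSet {ω | ∀ i, cat (X i ω) = f i} := by
    intro f
    rw [hWf]
    exact MeasurableSet.iInter fun i => (hXmeas i) (hcatmeas (measurableSet_singleton _))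
  have hdisj : (↑S : Set (Fin n → Fin 4)).PairwiseDisjoint
      (fun f => {ω | ∀ i, cat (X i ω) = f i}) := by
    intro f _ g _ hfg
    apply Set.disjoint_left.mpr
    intro ω hf hg
    exact hfg (funext fun i => (hf i).symm.trans (hg i))
  rw [hE'_def, measure_biUnion_finset hdisj (fun f _ => hmeasW f)]
  -- each atom has the same probability
  have hterm : ∀ f ∈ S, ℙ {ω | ∀ i, cat (X i ω) = f i}
      = ENNReal.ofReal (eD^a * ((eX-eD)^bt * ((eU-eX)^(b-bt) * (1-eU)^(n-a-b)))) := by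
    intro f hfS
    rw [hWf]
    have hiInter : (⋂ i, (X i) ⁻¹' (cat ⁻¹' {f i}))
        = ⋂ i ∈ Finset.univ, (X i) ⁻¹' (cat ⁻¹' {f i}) := by simp
    rw [hiInter, hindep.measure_inter_preimage_eq_mul Finset.univ
      (fun i _ => hcatmeas (measurableSet_singleton _))]
    rw [Finset.prod_congr rfl (fun i _ => hkey i (f i)),
      ← ENNReal.ofReal_prod_of_nonneg (fun i _ => hpnonneg (f i))]
    congr 1
    rw [hS_def, Finset.mem_filter] at hfS
    obtain ⟨-, h0, h1, h2⟩ := hfS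
    have hsum : ∑ k : Fin 4, (Finset.univ.filter fun i => f i = k).card = n := by
      have hcu := Finset.card_eq_sum_card_fiberwise
        (fun (i : Fin n) (_ : i ∈ Finset.univ) => Finset.mem_univ (f i))
      simpa using hcu.symm
    rw [Fin.sum_univ_four] at hsum
    have h3 : (Finset.univ.filter fun i => f i = 3).card = n - a - b := by omega
    calc ∏ i, p (f i)
        = ∏ k : Fin 4, ∏ i ∈ Finset.univ.filter fun i => f i = k, p (f i) :=
          (Finset.prod_fiberwise Finset.univ f (fun i => p (f i))).symm
      _ = ∏ k : Fin 4, p k ^ (Finset.univ.filter fun i => f i = k).card := by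
          apply Finset.prod_congr rfl
          intro k _
          rw [Finset.prod_congr rfl (fun i hi => by rw [(Finset.mem_filter.mp hi).2]),
            Finset.prod_const]
      _ = eD^a * ((eX-eD)^bt * ((eU-eX)^(b-bt) * (1-eU)^(n-a-b))) := by
          rw [Fin.prod_univ_four, h0, h1, h2, h3]
          simp only [hp_def, Matrix.cons_val_zero, Matrix.cons_val_one, Matrix.head_cons,
            Matrix.cons_val_two, Matrix.tail_cons, Matrix.cons_val_three, Matrix.head_fin_const]
          ring
  rw [Finset.sum_congr rfl hterm, Finset.sum_const]
  have hcardS : S.card = n.choose a * ((n-a).choose bt * ((n-a-bt).choose (b-bt))) := by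
    rw [hS_def]
    exact XorCoWAux.count_funs n a bt (b-bt)
  rw [hcardS, nsmul_eq_mul]
  rw [show ((n.choose a * ((n-a).choose bt * ((n-a-bt).choose (b-bt))) : ℕ) : ENNReal)
      = ENNReal.ofReal ((n.choose a * ((n-a).choose bt * ((n-a-bt).choose (b-bt))) : ℕ) : ℝ) from
      (ENNReal.ofReal_natCast _).symm]
  rw [← ENNReal.ofReal_mul (by positivity)]
  apply congrArg ENNReal.ofReal
  have halg := XorCoWAux.alg_lemma eU eX eD heDpos heDX heXU heU1 heDU n a b bt hab hbt
  rw [houtU, houtX, houtD]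
  rw [← halg]
  push_cast
  ring
end
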